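/- Let n be a positive integer, β ∈ ℂ, c₁, c₂, c₃, c₄ ∈ Mat_n(ℂ), and let f, g : ℂ → Mat_n(ℂ) be differentiable functions satisfying f'(x) = −f² + g − (x/2)·I − c₁ and g'(x) = 2gf + β(gf − fg) + c₂ f + f c₃ + c₄ for all x ∈ ℂ. Then y = f is twice differentiable and satisfies the matrix Painlevé-2 equation y'' = κ[y, y'] + 2y³ + x y + b₁ y + y b₂ + a, where κ = −1 − β, b₁ = c₂ + (2+β)c₁, b₂ = c₃ − βc₁, and a = c₄ − (1/2)·I. -/

import Mathlib

attribute [local instance] Matrix.linftyOpNormedAddCommGroup Matrix.linftyOpNormedSpace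
  Matrix.linftyOpNormedRing Matrix.linftyOpNormedAlgebra

/-- If `f, g : ℂ → Mat_n(ℂ)` solve the first-order system
`f' = −f² + g − (x/2)I − c₁`, `g' = 2gf + β(gf − fg) + c₂f + fc₃ + c₄`, then `y = f`
satisfies the matrix Painlevé-2 equation
`y'' = κ[y, y'] + 2y³ + xy + b₁y + yb₂ + a` with `κ = −1 − β`, `b₁ = c₂ + (2+β)c₁`,
`b₂ = c₃ − βc₁`, `a = c₄ − (1/2)I`. -/
theorem matrix_P2_from_system (n : ℕ) (hn : 0 < n) (β : ℂ)
    (c₁ c₂ c₃ c₄ : Matrix (Fin n) (Fin n) ℂ)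
    (f g : ℂ → Matrix (Fin n) (Fin n) ℂ)
    (hf : ∀ x : ℂ, HasDerivAt f (-(f x) ^ 2 + g x - (x / 2) • 1 - c₁) x)
    (hg : ∀ x : ℂ, HasDerivAt g
      (2 * (g x * f x) + β • (g x * f x - f x * g x) + c₂ * f x + f x * c₃ + c₄) x) :
    ∀ x : ℂ, HasDerivAt (deriv f)
      ((-1 - β) • (f x * deriv f x - deriv f x * f x) + 2 * (f x) ^ 3 + x • f x
        + (c₂ + (2 + β) • c₁) * f x + f x * (c₃ - β • c₁) + (c₄ - (1 / 2 : ℂ) • 1)) x := by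
  
  intro x
  have hd : deriv f = fun x => -(f x) ^ 2 + g x - (x / 2) • 1 - c₁ :=
    funext fun x => (hf x).deriv
  rw [hd]
  set E := -(f x) ^ 2 + g x - (x / 2) • 1 - c₁ with hE
  have h1 : HasDerivAt (fun x => (f x) ^ 2) (E * f x + f x * E) x := by
    have h := (hf x).mul (hf x)
    simp only [← pow_two] at h
    exact h
  have h2 : HasDerivAt (fun x : ℂ => (x / 2) • (1 : Matrix (Fin n) (Fin n) ℂ))
      ((1 / 2 : ℂ) • 1) x := by
    exact ((hasDerivAt_id x).div_const 2).smul_const (1 : Matrix (Fin n) (Fin n) ℂ)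
  have h3 : HasDerivAt (fun x => -(f x) ^ 2 + g x - (x / 2) • 1 - c₁)
      (-(E * f x + f x * E) + (2 * (g x * f x) + β • (g x * f x - f x * g x)
        + c₂ * f x + f x * c₃ + c₄) - (1 / 2 : ℂ) • 1) x := by
    exact ((h1.neg.add (hg x)).sub h2).sub_const c₁
  convert h3 using 1
  rw [hE]
  simp only [mul_add, add_mul, mul_sub, sub_mul, smul_sub, smul_add, sub_smul, add_smul,
    smul_smul, mul_smul_comm, smul_mul_assoc, neg_mul, mul_neg, pow_succ, pow_zero, one_mul,
    mul_one, neg_add, neg_sub, neg_neg, two_mul, mul_assoc]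
  module
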